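/- Fix an integer $N \geq 1$ and let $\mathcal{R}$ denote the set of axis-parallel rectangles contained in $[0,1]^2$ whose corners lie in the lattice $\Lambda^{(N)} = \{k2^{-N} : 0 \le k \le 2^N\}^2$. For $1 \le n \le N$, let $\mathcal{T}^{(n)}$ be the set of rectangles with corners in $\Lambda^{(n)}$ and with side dimensions $2^{-n} \times k2^{-n}$ or $k2^{-n} \times 2^{-n}$ for some $1 \le k \le 2^n$ ('n-thin rectangles'). Then for every $r \in \mathcal{R}$ there exists a finite set $\mathfrak{t} \subset \bigcup_{n=1}^N \mathcal{T}^{(n)}$ that partitions $r$ (up to boundary overlaps of measure zero) and such that for every $\alpha \in (0,1]$ one has $\sum_{t \in \mathfrak{t}} |t|^\alpha \le C_\alpha\, |r|^\alpha$, where $|t|$ denotes the area of $t$ and $C_\alpha$ depends only on $\alpha$. -/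

import Mathlib

open MeasureTheory

/-- An axis-parallel rectangle in `[0,1]²` with corners in the dyadic lattice of mesh `2^{-n}`. -/
def IsDyadicRect (n : ℕ) (r : Set (ℝ × ℝ)) : Prop :=
  ∃ a b c d : ℕ, a < b ∧ c < d ∧ b ≤ 2 ^ n ∧ d ≤ 2 ^ n ∧
    r = Set.Icc ((a : ℝ) / 2 ^ n) ((b : ℝ) / 2 ^ n) ×ˢ
        Set.Icc ((c : ℝ) / 2 ^ n) ((d : ℝ) / 2 ^ n)

/-- An `n`-thin rectangle: corners in the lattice of mesh `2^{-n}` and one side of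
length exactly `2^{-n}`. -/
def IsThinRect (n : ℕ) (r : Set (ℝ × ℝ)) : Prop :=
  ∃ a b c d : ℕ, a < b ∧ c < d ∧ b ≤ 2 ^ n ∧ d ≤ 2 ^ n ∧ (b = a + 1 ∨ d = c + 1) ∧
    r = Set.Icc ((a : ℝ) / 2 ^ n) ((b : ℝ) / 2 ^ n) ×ˢ
        Set.Icc ((c : ℝ) / 2 ^ n) ((d : ℝ) / 2 ^ n)

namespace DyDec

def D : ℕ → ℕ → ℕ → List (ℕ × ℕ)
  | 0, _, _ => []
  | 1, a, b => (List.range (b - a)).map fun i => (1, a + i)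
  | (N+2), a, b =>
    if b ≤ a + 1 then (if a < b then [(N+2, a)] else [])
    else (if a % 2 = 1 then [(N+2, a)] else [])
      ++ D (N+1) ((a + a % 2)/2) ((b - b % 2)/2)
      ++ (if b % 2 = 1 then [(N+2, b-1)] else [])

def TilesP (N : ℕ) : ℕ → ℕ → List (ℕ × ℕ) → Prop
  | a, b, [] => a = b
  | a, b, p :: t => 1 ≤ p.1 ∧ p.1 ≤ N ∧ p.2 * 2^(N - p.1) = a ∧
      TilesP N (a + 2^(N - p.1)) b t

theorem TilesP.le {N a b : ℕ} {l : List (ℕ × ℕ)} (h : TilesP N a b l) : a ≤ b := by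
  induction l generalizing a with
  | nil => exact (show a = b from h).le
  | cons p t ih =>
    obtain ⟨-, -, -, h4⟩ := h
    have := ih h4
    have hp : 0 < 2^(N - p.1) := Nat.pow_pos (by norm_num)
    omega

theorem TilesP.concat {N a b c : ℕ} {l l' : List (ℕ × ℕ)}
    (h : TilesP N a c l) (h' : TilesP N c b l') : TilesP N a b (l ++ l') := by
  induction l generalizing a with
  | nil => cases (show a = c from h); exact h'
  | cons p t ih =>
    obtain ⟨h1, h2, h3, h4⟩ := h
    exact ⟨h1, h2, h3, ih h4⟩

theorem TilesP.scale {N a b : ℕ} {l : List (ℕ × ℕ)} (h : TilesP N a b l) :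
    TilesP (N+1) (2*a) (2*b) l := by
  induction l generalizing a with
  | nil => cases (show a = b from h); rfl
  | cons p t ih =>
    obtain ⟨h1, h2, h3, h4⟩ := h
    have hexp : N + 1 - p.1 = (N - p.1) + 1 := by omega
    refine ⟨h1, h2.trans (Nat.le_succ N), ?_, ?_⟩
    · rw [hexp, pow_succ, ← mul_assoc, h3]; ring
    · have h5 := ih h4
      have heq : 2 * (a + 2 ^ (N - p.1)) = 2*a + 2^(N+1-p.1) := by
        rw [hexp, pow_succ]; ring
      rwa [heq] at h5

theorem tilesP_units : ∀ (k a : ℕ), TilesP 1 a (a + k) ((List.range k).map fun i => (1, a + i)) := by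
  intro k
  induction k with
  | zero => intro a; rfl
  | succ k ihk =>
    intro a
    rw [List.range_succ, List.map_append]
    refine (ihk a).concat ?_
    refine ⟨le_rfl, le_rfl, by simp, ?_⟩
    show a + k + 2 ^ (1-1) = a + (k+1)
    simp; omega

theorem tilesP_D : ∀ N a b : ℕ, 1 ≤ N → a ≤ b → TilesP N a b (D N a b) := by
  intro N
  induction N using Nat.strong_induction_on with
  | _ N ih =>
  match N with
  | 0 => intro a b h; omega
  | 1 =>
    intro a b _ hab
    have h2 := tilesP_units (b - a) a
    rw [Nat.add_sub_cancel' hab] at h2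
    simpa [D] using h2
  | (M+2) =>
    intro a b _ hab
    rw [D]
    by_cases h1 : b ≤ a + 1
    · rw [if_pos h1]
      by_cases h2 : a < b
      · rw [if_pos h2]
        have hb : b = a + 1 := by omega
        subst hb
        refine ⟨by omega, le_refl _, by simp, ?_⟩
        show a + 2 ^ (M + 2 - (M + 2)) = a + 1
        simp
      · rw [if_neg h2]
        show a = b
        omega
    · rw [if_neg h1]
      set a' := (a + a % 2) / 2 with ha'
      set b' := (b - b % 2) / 2 with hb'
      have ha2 : 2 * a' = a + a % 2 := by omega
      have hb2 : 2 * b' = b - b % 2 := by omega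
      have hmid : TilesP (M+2) (a + a % 2) (b - b % 2) (D (M+1) a' b') := by
        have hle : a' ≤ b' := by omega
        have := (ih (M+1) (by omega) a' b' (by omega) hle).scale
        rwa [ha2, hb2] at this
      refine TilesP.concat (TilesP.concat ?_ hmid) ?_
      · by_cases hpa : a % 2 = 1
        · rw [if_pos hpa]
          refine ⟨by omega, le_refl _, by simp, ?_⟩
          show a + 2 ^ (M + 2 - (M + 2)) = a + a % 2
          simp [hpa]
        · rw [if_neg hpa]
          show a = a + a % 2
          omega
      · by_cases hpb : b % 2 = 1
        · rw [if_pos hpb]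
          refine ⟨by omega, le_refl _, ?_, ?_⟩
          · simp; omega
          · show b - b % 2 + 2 ^ (M + 2 - (M + 2)) = b
            simp; omega
        · rw [if_neg hpb]
          show b - b % 2 = b
          omega

def Iv (p : ℕ × ℕ) : Set ℝ := Set.Icc ((p.2 : ℝ)/2^p.1) (((p.2:ℝ)+1)/2^p.1)

theorem castCL {n N j : ℕ} (h : n ≤ N) :
    ((j * 2^(N-n) : ℕ) : ℝ)/2^N = (j : ℝ)/2^n := by
  have h2 : (2:ℝ)^N = 2^(N-n) * 2^n := by
    rw [← pow_add]; congr 1; omega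
  push_cast
  rw [h2]
  have h3 : (2:ℝ)^(N-n) ≠ 0 := by positivity
  have h4 : (2:ℝ)^n ≠ 0 := by positivity
  field_simp

theorem TilesP.nil_of_eq {N b : ℕ} {l : List (ℕ × ℕ)} (h : TilesP N b b l) : l = [] := by
  cases l with
  | nil => rfl
  | cons p t =>
    obtain ⟨-, -, -, h4⟩ := h
    have := h4.le
    have hp : 0 < 2^(N - p.1) := Nat.pow_pos (by norm_num)
    omega

theorem TilesP.head_Iv {N a b : ℕ} {p : ℕ × ℕ} {t : List (ℕ × ℕ)}
    (h : TilesP N a b (p :: t)) :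
    Iv p = Set.Icc ((a:ℝ)/2^N) (((a + 2^(N - p.1) : ℕ) : ℝ)/2^N) := by
  obtain ⟨-, h2, h3, -⟩ := h
  unfold Iv
  rw [← h3]
  rw [show (p.2 * 2^(N-p.1) + 2^(N-p.1)) = (p.2+1) * 2^(N-p.1) by ring]
  rw [castCL h2, castCL h2]
  push_cast
  rfl

theorem TilesP.union {N a b : ℕ} {l : List (ℕ × ℕ)} (h : TilesP N a b l) (hab : a < b) :
    (⋃ p ∈ l, Iv p) = Set.Icc ((a:ℝ)/2^N) ((b:ℝ)/2^N) := by
  induction l generalizing a with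
  | nil => exact absurd (show a = b from h) (by omega)
  | cons p t ih =>
    have hh := h
    obtain ⟨h1, h2, h3, h4⟩ := hh
    have hcb : a + 2^(N - p.1) ≤ b := h4.le
    have hIv := h.head_Iv
    rcases eq_or_lt_of_le hcb with hcb' | hcb'
    · have ht : t = [] := by rw [hcb'] at h4; exact h4.nil_of_eq
      subst ht
      simp only [List.mem_singleton, Set.iUnion_iUnion_eq_left]
      rw [hIv, hcb']
    · have hu := ih h4 hcb'
      simp only [List.mem_cons, Set.iUnion_iUnion_eq_or_left]
      rw [hu, hIv]
      apply Set.Icc_union_Icc_eq_Icc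
      · apply div_le_div_of_nonneg_right ?_ (by positivity)
        exact_mod_cast Nat.le_add_right _ _
      · apply div_le_div_of_nonneg_right ?_ (by positivity)
        exact_mod_cast hcb

theorem TilesP.lower {N a b : ℕ} {l : List (ℕ × ℕ)} (h : TilesP N a b l) :
    ∀ p ∈ l, a ≤ p.2 * 2^(N - p.1) := by
  induction l generalizing a with
  | nil => intro p hp; cases hp
  | cons q t ih =>
    intro p hp
    obtain ⟨-, -, h3, h4⟩ := h
    rcases List.mem_cons.mp hp with hp | hp
    · subst hp; omega
    · have := ih h4 p hp
      have hpq : 0 < 2^(N - q.1) := Nat.pow_pos (by norm_num)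
      omega

theorem TilesP.ordered {N a b : ℕ} {l : List (ℕ × ℕ)} (h : TilesP N a b l) :
    l.Pairwise (fun p q => (p.2+1) * 2^(N - p.1) ≤ q.2 * 2^(N - q.1)) := by
  induction l generalizing a with
  | nil => exact List.Pairwise.nil
  | cons p t ih =>
    obtain ⟨-, -, h3, h4⟩ := h
    refine List.Pairwise.cons ?_ (ih h4)
    intro q hq
    have := h4.lower q hq
    have heq : (p.2+1) * 2^(N - p.1) = a + 2^(N - p.1) := by rw [add_mul]; omega
    omega

theorem TilesP.upper {N a b : ℕ} {l : List (ℕ × ℕ)} (h : TilesP N a b l) :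
    ∀ p ∈ l, (p.2+1) * 2^(N - p.1) ≤ b := by
  induction l generalizing a with
  | nil => intro p hp; cases hp
  | cons q t ih =>
    intro p hp
    obtain ⟨-, -, h3, h4⟩ := h
    rcases List.mem_cons.mp hp with hp | hp
    · subst hp
      have := h4.le
      have heq : (p.2+1) * 2^(N - p.1) = a + 2^(N - p.1) := by rw [add_mul]; omega
      omega
    · exact ih h4 p hp

theorem TilesP.width_le {N a b : ℕ} {l : List (ℕ × ℕ)} (h : TilesP N a b l) :
    ∀ p ∈ l, 2^(N - p.1) ≤ b - a := by
  intro p hp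
  have h1 := h.lower p hp
  have h2 := h.upper p hp
  have heq : (p.2+1) * 2^(N - p.1) = p.2 * 2^(N - p.1) + 2^(N - p.1) := by ring
  omega

theorem TilesP.volzero {N a b : ℕ} {l : List (ℕ × ℕ)} (h : TilesP N a b l) :
    ∀ p ∈ l, ∀ q ∈ l, p ≠ q → volume (Iv p ∩ Iv q) = 0 := by
  have key : ∀ p q : ℕ × ℕ, p.1 ≤ N → q.1 ≤ N →
      (p.2+1) * 2^(N - p.1) ≤ q.2 * 2^(N - q.1) → volume (Iv p ∩ Iv q) = 0 := by
    intro p q hp hq hineq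
    have hle : ((p.2:ℝ)+1)/2^p.1 ≤ (q.2:ℝ)/2^q.1 := by
      have e1 := castCL (j := p.2+1) hp
      have e2 := castCL (j := q.2) hq
      push_cast at e1
      rw [← e1, ← e2]
      apply div_le_div_of_nonneg_right ?_ (by positivity)
      exact_mod_cast hineq
    have hsub : Iv p ∩ Iv q ⊆ Set.Icc ((q.2:ℝ)/2^q.1) (((p.2:ℝ)+1)/2^p.1) :=
      fun x hx => ⟨hx.2.1, hx.1.2⟩
    refine measure_mono_null hsub ?_
    rw [Real.volume_Icc, ENNReal.ofReal_eq_zero]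
    linarith
  have hlev : ∀ p ∈ l, p.1 ≤ N := by
    induction l generalizing a with
    | nil => intro p hp; cases hp
    | cons q t ih =>
      intro p hp
      obtain ⟨-, h2, -, h4⟩ := h
      rcases List.mem_cons.mp hp with hp | hp
      · subst hp; exact h2
      · exact ih h4 p hp
  have hord' : l.Pairwise (fun p q => volume (Iv p ∩ Iv q) = 0) :=
    h.ordered.imp_of_mem (fun {p q} hpm hqm hr => key p q (hlev p hpm) (hlev q hqm) hr)
  have hsymm : Symmetric (fun p q : ℕ × ℕ => volume (Iv p ∩ Iv q) = 0) := by
    intro x y hxy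
    rw [Set.inter_comm]
    exact hxy
  exact fun p hp q hq hne =>
    haveI : Std.Symm (fun p q : ℕ × ℕ => volume (Iv p ∩ Iv q) = 0) := ⟨fun _ _ h => hsymm h⟩
    hord'.forall hp hq hne

theorem TilesP.nodup {N a b : ℕ} {l : List (ℕ × ℕ)} (h : TilesP N a b l) : l.Nodup := by
  refine h.ordered.imp_of_mem ?_
  intro p q hpm hqm hr heq
  subst heq
  have hp : 0 < 2^(N - p.1) := Nat.pow_pos (by norm_num)
  have : (p.2+1) * 2^(N-p.1) = p.2*2^(N-p.1) + 2^(N-p.1) := by ring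
  omega

noncomputable def phi (α : ℝ) (m : ℕ) : ℝ :=
  if m = 0 then 0 else 2 * ∑ j ∈ Finset.range (Nat.log 2 m + 1), ((2:ℝ)^α)^j

theorem two_rpow_pos (α : ℝ) : 0 < (2:ℝ)^α := Real.rpow_pos_of_pos (by norm_num) α

theorem one_lt_two_rpow {α : ℝ} (hα : 0 < α) : 1 < (2:ℝ)^α := by
  rw [Real.one_lt_rpow_iff_of_pos (by norm_num)]
  left
  exact ⟨by norm_num, hα⟩

theorem phi_nonneg (α : ℝ) (m : ℕ) : 0 ≤ phi α m := by
  unfold phi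
  split
  · exact le_refl 0
  · positivity

theorem phi_mono (α : ℝ) {m m' : ℕ} (h : m ≤ m') : phi α m ≤ phi α m' := by
  rcases Nat.eq_zero_or_pos m with hm | hm
  · rw [hm]; simpa [phi] using phi_nonneg α m'
  · have hm' : m' ≠ 0 := by omega
    unfold phi
    rw [if_neg (by omega), if_neg hm']
    have hsub : Finset.range (Nat.log 2 m + 1) ⊆ Finset.range (Nat.log 2 m' + 1) := by
      apply Finset.range_subset_range.mpr
      have := Nat.log_mono_right (b := 2) h
      omega
    have := Finset.sum_le_sum_of_subset_of_nonneg hsub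
      (fun j _ _ => by positivity : ∀ j ∈ Finset.range (Nat.log 2 m' + 1),
        j ∉ Finset.range (Nat.log 2 m + 1) → 0 ≤ ((2:ℝ)^α)^j)
    linarith

theorem phi_one (α : ℝ) : phi α 1 = 2 := by simp [phi]

theorem phi_rec {α : ℝ} {m : ℕ} (hm : 2 ≤ m) :
    phi α m = 2 + (2:ℝ)^α * phi α (m / 2) := by
  have hL : Nat.log 2 (m/2) = Nat.log 2 m - 1 := Nat.log_div_base 2 m
  have hLpos : 0 < Nat.log 2 m := Nat.log_pos (by norm_num) hm
  unfold phi
  rw [if_neg (by omega), if_neg (by omega)]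
  have h1 : Nat.log 2 m + 1 = (Nat.log 2 (m/2) + 1) + 1 := by omega
  rw [h1, geom_sum_succ]
  ring

theorem phi_le {α : ℝ} (hα : 0 < α) {m : ℕ} (hm : 1 ≤ m) :
    phi α m ≤ (2 * (2:ℝ)^α / ((2:ℝ)^α - 1)) * (m:ℝ)^α := by
  set x := (2:ℝ)^α with hx
  have hx1 : 1 < x := one_lt_two_rpow hα
  set L := Nat.log 2 m with hL
  have hphi : phi α m = 2 * ((x^(L+1) - 1)/(x - 1)) := by
    unfold phi
    rw [if_neg (by omega), geom_sum_eq (by linarith)]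
  rw [hphi]
  have hxL : x^L ≤ (m:ℝ)^α := by
    have h2L : ((2:ℕ)^L : ℝ) ≤ (m:ℝ) := by
      exact_mod_cast Nat.pow_log_le_self 2 (by omega)
    calc x^L = ((2:ℝ)^(L:ℕ))^α := by
          rw [← Real.rpow_natCast ((2:ℝ)^α) L, ← Real.rpow_natCast (2:ℝ) L,
            ← Real.rpow_mul (by norm_num), ← Real.rpow_mul (by norm_num), mul_comm]
      _ ≤ (m:ℝ)^α := by
          apply Real.rpow_le_rpow (by positivity) ?_ hα.le
          exact_mod_cast h2L
  have hden : 0 < x - 1 := by linarith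
  have h1 : 2 * ((x^(L+1) - 1)/(x - 1)) = (2*x^(L+1) - 2)/(x-1) := by ring
  have h2 : (2*(2:ℝ)^α/((2:ℝ)^α-1)) * (m:ℝ)^α = (2*x*(m:ℝ)^α)/(x-1) := by
    rw [← hx]; ring
  rw [h1, h2, div_le_div_iff₀ hden hden]
  have h3 : 2 * x * x^L ≤ 2*x*(m:ℝ)^α := by
    apply mul_le_mul_of_nonneg_left hxL
    positivity
  have h4 : x^(L+1) = x * x^L := by ring
  nlinarith [hden]

theorem D_levels : ∀ N a b : ℕ, ∀ p ∈ D N a b, 1 ≤ p.1 ∧ p.1 ≤ N := by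
  intro N
  induction N using Nat.strong_induction_on with
  | _ N ih =>
  match N with
  | 0 => intro a b p hp; cases hp
  | 1 =>
    intro a b p hp
    rw [D] at hp
    obtain ⟨i, -, rfl⟩ := List.mem_map.mp hp
    exact ⟨le_rfl, le_rfl⟩
  | (M+2) =>
    intro a b p hp
    rw [D] at hp
    split at hp
    · split at hp
      · rcases List.mem_singleton.mp hp with rfl
        exact ⟨by omega, le_rfl⟩
      · cases hp
    · rcases List.mem_append.mp hp with hp' | hp'
      · rcases List.mem_append.mp hp' with hp'' | hp''
        · split at hp''
          · rcases List.mem_singleton.mp hp'' with rfl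
            exact ⟨by omega, le_rfl⟩
          · cases hp''
        · have := ih (M+1) (by omega) _ _ p hp''
          omega
      · split at hp'
        · rcases List.mem_singleton.mp hp' with rfl
          exact ⟨by omega, le_rfl⟩
        · cases hp'

theorem sum_D_le {α : ℝ} (hα : 0 < α) :
    ∀ N a b : ℕ, b ≤ 2^N →
      ((D N a b).map (fun p => ((2:ℝ)^(N - p.1) : ℝ)^α)).sum ≤ phi α (b - a) := by
  intro N
  induction N using Nat.strong_induction_on with
  | _ N ih =>
  match N with
  | 0 => intro a b hb; simpa [D] using phi_nonneg α (b - a)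
  | 1 =>
    intro a b hb
    rw [D, List.map_map]
    have hconst : ((List.range (b-a)).map
        ((fun p : ℕ × ℕ => ((2:ℝ)^(1 - p.1) : ℝ)^α) ∘ (fun i => (1, a + i)))) =
        List.replicate (b-a) 1 := by
      rw [show ((fun p : ℕ × ℕ => ((2:ℝ)^(1 - p.1) : ℝ)^α) ∘ (fun i : ℕ => (1, a + i)))
          = fun _ : ℕ => (1:ℝ) by funext i; simp]
      rw [List.map_const', List.length_range]
    rw [hconst, List.sum_replicate, nsmul_eq_mul, mul_one]
    have hx := two_rpow_pos α
    have hm : b - a ≤ 2 := by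
      have : (2:ℕ)^1 = 2 := by norm_num
      omega
    interval_cases h : (b - a)
    · simp [phi]
    · rw [phi_one]; norm_num
    · have : phi α 2 = 2 * (1 + (2:ℝ)^α) := by
        have hlog : Nat.log 2 2 = 1 := Nat.log_eq_one_iff.mpr (by norm_num)
        simp [phi, hlog, geom_sum_succ']
        ring
      rw [this]
      push_cast
      linarith
  | (M+2) =>
    intro a b hb
    rw [D]
    have hpow : (2:ℕ)^(M+2) = 2 * 2^(M+1) := by ring
    by_cases h1 : b ≤ a + 1
    · rw [if_pos h1]
      by_cases h2 : a < b
      · rw [if_pos h2]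
        have hm : b - a = 1 := by omega
        rw [hm, phi_one]
        simp [Real.one_rpow]
      · rw [if_neg h2]
        simpa using phi_nonneg α (b - a)
    · rw [if_neg h1]
      set a' := (a + a % 2) / 2 with ha'
      set b' := (b - b % 2) / 2 with hb'
      set w : ℕ × ℕ → ℝ := fun p => ((2:ℝ)^(M + 2 - p.1) : ℝ)^α with hw
      rw [List.map_append, List.sum_append, List.map_append, List.sum_append]
      have hx := two_rpow_pos α
      have hunit : w (M+2, a) = 1 ∧ w (M+2, b-1) = 1 := by
        constructor <;> simp [hw, Real.one_rpow]
      have hS1 : ((if a % 2 = 1 then [(M+2, a)] else []).map w).sum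
          = if a % 2 = 1 then 1 else 0 := by
        split <;> simp [hunit.1]
      have hS2 : ((if b % 2 = 1 then [(M+2, b-1)] else []).map w).sum
          = if b % 2 = 1 then 1 else 0 := by
        split <;> simp [hunit.2]
      have hmid : ((D (M+1) a' b').map w).sum
          ≤ (2:ℝ)^α * phi α (b' - a') := by
        have hcongr : (D (M+1) a' b').map w
            = (D (M+1) a' b').map (fun p => (2:ℝ)^α * ((2:ℝ)^(M + 1 - p.1) : ℝ)^α) := by
          apply List.map_congr_left
          intro p hp
          have hlev := D_levels (M+1) a' b' p hp
          have hexp : M + 2 - p.1 = (M + 1 - p.1) + 1 := by omega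
          rw [hw]
          simp only
          rw [hexp, pow_succ, mul_comm ((2:ℝ)^(M+1-p.1)) 2,
            Real.mul_rpow (by norm_num) (by positivity)]
        rw [hcongr, List.sum_map_mul_left]
        apply mul_le_mul_of_nonneg_left ?_ hx.le
        apply ih (M+1) (by omega) a' b'
        omega
      have hrec : phi α (b - a) = 2 + (2:ℝ)^α * phi α ((b - a) / 2) := phi_rec (by omega)
      have hmono : phi α (b' - a') ≤ phi α ((b - a)/2) := phi_mono α (by omega)
      have hphp : 0 ≤ phi α (b' - a') := phi_nonneg _ _
      rw [hS1, hS2, hrec]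
      have : (if a % 2 = 1 then (1:ℝ) else 0) ≤ 1 := by split <;> norm_num
      have : (if b % 2 = 1 then (1:ℝ) else 0) ≤ 1 := by split <;> norm_num
      have h5 : (2:ℝ)^α * phi α (b' - a') ≤ (2:ℝ)^α * phi α ((b-a)/2) :=
        mul_le_mul_of_nonneg_left hmono hx.le
      split <;> split <;> linarith

theorem List.sum_map_mul_right' {l : List (ℕ × ℕ)} {f : ℕ × ℕ → ℝ} {r : ℝ} :
    (l.map fun p => f p * r).sum = (l.map f).sum * r := by
  induction l with
  | nil => simp
  | cons p t ih => simp [ih]; ring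

theorem oneD_sum {α : ℝ} (hα : 0 < α) {N a b : ℕ} (hab : a < b) (hb : b ≤ 2^N) :
    ((D N a b).map (fun p => (((2:ℝ)^p.1)⁻¹) ^ α)).sum
      ≤ (2*(2:ℝ)^α/((2:ℝ)^α - 1)) * (((b:ℝ) - a)/2^N)^α := by
  have hcongr : (D N a b).map (fun p => (((2:ℝ)^p.1)⁻¹) ^ α)
      = (D N a b).map (fun p => ((2:ℝ)^(N - p.1))^α * ((((2:ℝ)^N)^α)⁻¹)) := by
    apply List.map_congr_left
    intro p hp
    have hlev := D_levels N a b p hp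
    have hN2 : (2:ℝ)^N = 2^(N-p.1) * 2^p.1 := by rw [← pow_add]; congr 1; omega
    have hsplit : ((2:ℝ)^p.1)⁻¹ = (2:ℝ)^(N - p.1) / (2:ℝ)^N := by
      rw [hN2]
      field_simp
    rw [hsplit, Real.div_rpow (by positivity) (by positivity), div_eq_mul_inv]
  rw [hcongr, List.sum_map_mul_right']
  have h1 := sum_D_le hα N a b hb
  have h2 := phi_le hα (m := b - a) (by omega)
  have hinv : (0:ℝ) ≤ (((2:ℝ)^N)^α)⁻¹ := by positivity
  have h3 : ((D N a b).map (fun p => ((2:ℝ)^(N - p.1))^α)).sum * (((2:ℝ)^N)^α)⁻¹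
      ≤ ((2*(2:ℝ)^α/((2:ℝ)^α - 1)) * ((b - a : ℕ):ℝ)^α) * (((2:ℝ)^N)^α)⁻¹ := by
    apply mul_le_mul_of_nonneg_right (h1.trans h2) hinv
  refine h3.trans (le_of_eq ?_)
  have hcast : ((b - a : ℕ):ℝ) = (b:ℝ) - a := by
    push_cast [Nat.cast_sub hab.le]
    ring
  have hba : (0:ℝ) ≤ (b:ℝ) - a := by
    have : (a:ℝ) ≤ b := by exact_mod_cast hab.le
    linarith
  rw [hcast, Real.div_rpow hba (by positivity)]
  rw [div_eq_mul_inv]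
  ring

theorem sum_image_le {γ β : Type*} [DecidableEq β] (s : Finset γ) (F : γ → β)
    (g : β → ℝ) (hg : ∀ x, 0 ≤ g x) :
    ∑ t ∈ s.image F, g t ≤ ∑ x ∈ s, g (F x) := by
  classical
  induction s using Finset.induction_on with
  | empty => simp
  | insert a s ha ih =>
    rw [Finset.image_insert, Finset.sum_insert ha]
    by_cases h : F a ∈ s.image F
    · rw [Finset.insert_eq_self.mpr h]
      linarith [hg (F a)]
    · rw [Finset.sum_insert h]
      linarith

theorem volume_Iv (p : ℕ × ℕ) : volume (Iv p) = ENNReal.ofReal (((2:ℝ)^p.1)⁻¹) := by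
  unfold Iv
  rw [Real.volume_Icc]
  congr 1
  rw [div_sub_div_same]
  norm_num

theorem TilesP.levels {N a b : ℕ} {l : List (ℕ × ℕ)} (h : TilesP N a b l) :
    ∀ p ∈ l, 1 ≤ p.1 ∧ p.1 ≤ N := by
  induction l generalizing a with
  | nil => intro p hp; cases hp
  | cons q t ih =>
    intro p hp
    obtain ⟨h1, h2, -, h4⟩ := h
    rcases List.mem_cons.mp hp with hp | hp
    · subst hp; exact ⟨h1, h2⟩
    · exact ih h4 p hp

theorem Iv_rescale {K : ℕ} {p : ℕ × ℕ} (h : p.1 ≤ K) :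
    Iv p = Set.Icc (((p.2 * 2^(K - p.1) : ℕ) : ℝ)/2^K)
      ((((p.2+1) * 2^(K - p.1) : ℕ) : ℝ)/2^K) := by
  unfold Iv
  rw [castCL h, castCL h]
  push_cast
  rfl

theorem thin_tile {N a b c d : ℕ} {lx ly : List (ℕ × ℕ)}
    (hTx : TilesP N a b lx) (hTy : TilesP N c d ly) (hb : b ≤ 2^N) (hd : d ≤ 2^N)
    {p q : ℕ × ℕ} (hp : p ∈ lx) (hq : q ∈ ly) :
    1 ≤ max p.1 q.1 ∧ max p.1 q.1 ≤ N ∧ IsThinRect (max p.1 q.1) (Iv p ×ˢ Iv q) := by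
  obtain ⟨hp1, hpN⟩ := hTx.levels p hp
  obtain ⟨hq1, hqN⟩ := hTy.levels q hq
  set K := max p.1 q.1 with hK
  have hKN : K ≤ N := max_le hpN hqN
  have hpK : p.1 ≤ K := le_max_left _ _
  have hqK : q.1 ≤ K := le_max_right _ _
  have hposp : 0 < 2^(K - p.1) := Nat.pow_pos (by norm_num)
  have hposq : 0 < 2^(K - q.1) := Nat.pow_pos (by norm_num)
  refine ⟨le_trans hp1 hpK, hKN, ?_⟩
  have hub : p.2 + 1 ≤ 2^p.1 := by
    have h1 := hTx.upper p hp
    have h2 : (2:ℕ)^N = 2^(N - p.1) * 2^p.1 := by rw [← pow_add]; congr 1; omega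
    have h3 : (p.2+1) * 2^(N - p.1) ≤ 2^p.1 * 2^(N - p.1) := by
      calc (p.2+1) * 2^(N - p.1) ≤ b := h1
      _ ≤ 2^N := hb
      _ = 2^p.1 * 2^(N - p.1) := by rw [← pow_add]; congr 1; omega
    exact Nat.le_of_mul_le_mul_right h3 (Nat.pow_pos (by norm_num))
  have hud : q.2 + 1 ≤ 2^q.1 := by
    have h1 := hTy.upper q hq
    have h3 : (q.2+1) * 2^(N - q.1) ≤ 2^q.1 * 2^(N - q.1) := by
      calc (q.2+1) * 2^(N - q.1) ≤ d := h1
      _ ≤ 2^N := hd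
      _ = 2^q.1 * 2^(N - q.1) := by rw [← pow_add]; congr 1; omega
    exact Nat.le_of_mul_le_mul_right h3 (Nat.pow_pos (by norm_num))
  refine ⟨p.2 * 2^(K - p.1), (p.2+1) * 2^(K - p.1), q.2 * 2^(K - q.1), (q.2+1) * 2^(K - q.1),
    ?_, ?_, ?_, ?_, ?_, ?_⟩
  · exact (Nat.mul_lt_mul_right hposp).mpr (by omega)
  · exact (Nat.mul_lt_mul_right hposq).mpr (by omega)
  · calc (p.2+1) * 2^(K - p.1) ≤ 2^p.1 * 2^(K - p.1) := Nat.mul_le_mul_right _ hub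
    _ = 2^K := by rw [← pow_add]; congr 1; omega
  · calc (q.2+1) * 2^(K - q.1) ≤ 2^q.1 * 2^(K - q.1) := Nat.mul_le_mul_right _ hud
    _ = 2^K := by rw [← pow_add]; congr 1; omega
  · rcases max_cases p.1 q.1 with ⟨hKe, hge⟩ | ⟨hKe, hge⟩
    · left
      have : K - p.1 = 0 := by omega
      rw [this]
      ring
    · right
      have : K - q.1 = 0 := by omega
      rw [this]
      ring
  · rw [Iv_rescale hpK, Iv_rescale hqK]

noncomputable def CC : ℝ → ℝ := fun α =>
  if 0 < α ∧ α ≤ 1 then (2*(2:ℝ)^α/((2:ℝ)^α - 1))^2 else 1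

end DyDec

open DyDec in
/-- every dyadic rectangle can be partitioned (up to boundary overlaps of
measure zero) into thin rectangles whose `α`-th powers of areas sum to at most
`C_α` times the `α`-th power of the area of the rectangle, with `C_α` depending
only on `α` (uniformly in `N` and `r`). -/
theorem dyadic_rect_decomposition :
    ∃ C : ℝ → ℝ, (∀ α : ℝ, 0 < C α) ∧
      ∀ N : ℕ, 1 ≤ N → ∀ r : Set (ℝ × ℝ), IsDyadicRect N r →
        ∃ 𝔱 : Finset (Set (ℝ × ℝ)),
          (∀ t ∈ 𝔱, ∃ n : ℕ, 1 ≤ n ∧ n ≤ N ∧ IsThinRect n t) ∧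
          (⋃ t ∈ 𝔱, t) = r ∧
          (∀ t ∈ 𝔱, ∀ t' ∈ 𝔱, t ≠ t' → volume (t ∩ t') = 0) ∧
          ∀ α : ℝ, 0 < α → α ≤ 1 →
            ∑ t ∈ 𝔱, (volume t).toReal ^ α ≤ C α * (volume r).toReal ^ α := by
  classical
  refine ⟨CC, ?_, ?_⟩
  · intro α
    unfold CC
    split
    · rename_i h
      have hx1 := one_lt_two_rpow h.1
      have hc : 0 < 2*(2:ℝ)^α/((2:ℝ)^α - 1) := by
        apply div_pos (by linarith) (by linarith)
      positivity
    · norm_num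
  · intro N hN r hr
    obtain ⟨a, b, c, d, hab, hcd, hbN, hdN, rfl⟩ := hr
    have hTx := tilesP_D N a b hN hab.le
    have hTy := tilesP_D N c d hN hcd.le
    set lx := D N a b with hlx
    set ly := D N c d with hly
    set F : (ℕ × ℕ) × (ℕ × ℕ) → Set (ℝ × ℝ) := fun pq => Iv pq.1 ×ˢ Iv pq.2 with hF
    set S : Finset ((ℕ × ℕ) × (ℕ × ℕ)) := lx.toFinset ×ˢ ly.toFinset with hS
    refine ⟨S.image F, ?_, ?_, ?_, ?_⟩
    · intro t ht
      obtain ⟨pq, hpq, rfl⟩ := Finset.mem_image.mp ht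
      rw [hS, Finset.mem_product] at hpq
      have hp := List.mem_toFinset.mp hpq.1
      have hq := List.mem_toFinset.mp hpq.2
      obtain ⟨h1, h2, h3⟩ := thin_tile hTx hTy hbN hdN hp hq
      exact ⟨max pq.1.1 pq.2.1, h1, h2, h3⟩
    · have hux := hTx.union hab
      have huy := hTy.union hcd
      ext z
      constructor
      · intro hz
        rw [Set.mem_iUnion₂] at hz
        obtain ⟨t, ht, hzt⟩ := hz
        obtain ⟨pq, hpq, rfl⟩ := Finset.mem_image.mp ht
        rw [hS, Finset.mem_product] at hpq
        have hp := List.mem_toFinset.mp hpq.1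
        have hq := List.mem_toFinset.mp hpq.2
        refine ⟨?_, ?_⟩
        · rw [← hux]
          exact Set.mem_iUnion₂.mpr ⟨pq.1, hp, hzt.1⟩
        · rw [← huy]
          exact Set.mem_iUnion₂.mpr ⟨pq.2, hq, hzt.2⟩
      · intro hz
        have hz1 := hz.1
        have hz2 := hz.2
        rw [← hux] at hz1
        rw [← huy] at hz2
        obtain ⟨p, hp, hzp⟩ := Set.mem_iUnion₂.mp hz1
        obtain ⟨q, hq, hzq⟩ := Set.mem_iUnion₂.mp hz2
        refine Set.mem_iUnion₂.mpr ⟨Iv p ×ˢ Iv q, ?_, ⟨hzp, hzq⟩⟩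
        exact Finset.mem_image.mpr ⟨(p, q),
          Finset.mem_product.mpr ⟨List.mem_toFinset.mpr hp, List.mem_toFinset.mpr hq⟩, rfl⟩
    · intro t ht t' ht' hne
      obtain ⟨pq, hpq, rfl⟩ := Finset.mem_image.mp ht
      obtain ⟨pq', hpq', rfl⟩ := Finset.mem_image.mp ht'
      rw [hS, Finset.mem_product] at hpq hpq'
      have hp := List.mem_toFinset.mp hpq.1
      have hq := List.mem_toFinset.mp hpq.2
      have hp' := List.mem_toFinset.mp hpq'.1
      have hq' := List.mem_toFinset.mp hpq'.2
      have key : volume (F pq ∩ F pq')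
          = volume (Iv pq.1 ∩ Iv pq'.1) * volume (Iv pq.2 ∩ Iv pq'.2) := by
        rw [hF]
        simp only
        rw [Set.prod_inter_prod, Measure.volume_eq_prod, Measure.prod_prod]
      by_cases hpp : pq.1 = pq'.1
      · have hqq : pq.2 ≠ pq'.2 := by
          intro hqq
          exact hne (by rw [hF]; simp only; rw [hpp, hqq])
        rw [key, hTy.volzero _ hq _ hq' hqq, mul_zero]
      · rw [key, hTx.volzero _ hp _ hp' hpp, zero_mul]
    · intro α hα hα1
      unfold CC
      rw [if_pos (⟨hα, hα1⟩ : 0 < α ∧ α ≤ 1)]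
      set cc := 2*(2:ℝ)^α/((2:ℝ)^α - 1) with hcc
      have hx1 := one_lt_two_rpow hα
      have hccpos : 0 < cc := div_pos (by linarith) (by linarith)
      have hgF : ∀ pq : (ℕ × ℕ) × (ℕ × ℕ),
          (volume (F pq)).toReal ^ α
            = (((2:ℝ)^pq.1.1)⁻¹)^α * (((2:ℝ)^pq.2.1)⁻¹)^α := by
        intro pq
        rw [hF]
        simp only
        rw [Measure.volume_eq_prod, Measure.prod_prod, volume_Iv, volume_Iv,
          ENNReal.toReal_mul, ENNReal.toReal_ofReal (by positivity),
          ENNReal.toReal_ofReal (by positivity),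
          Real.mul_rpow (by positivity) (by positivity)]
      have hA : ∑ t ∈ S.image F, (volume t).toReal ^ α
          ≤ ∑ pq ∈ S, (volume (F pq)).toReal ^ α :=
        sum_image_le S F _ (fun x => Real.rpow_nonneg ENNReal.toReal_nonneg α)
      have hB : ∑ pq ∈ S, (volume (F pq)).toReal ^ α
          = ((lx.map (fun p => (((2:ℝ)^p.1)⁻¹)^α)).sum)
            * ((ly.map (fun q => (((2:ℝ)^q.1)⁻¹)^α)).sum) := by
        rw [hS, Finset.sum_congr rfl (fun pq _ => hgF pq), Finset.sum_product]
        have hBB : ∑ x ∈ lx.toFinset, ∑ y ∈ ly.toFinset,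
            ((((2:ℝ)^x.1)⁻¹^α) * (((2:ℝ)^y.1)⁻¹^α))
            = (∑ x ∈ lx.toFinset, ((2:ℝ)^x.1)⁻¹^α)
              * (∑ y ∈ ly.toFinset, ((2:ℝ)^y.1)⁻¹^α) :=
          (Finset.sum_mul_sum _ _ _ _).symm
        exact hBB.trans (by
          rw [List.sum_toFinset _ hTx.nodup, List.sum_toFinset _ hTy.nodup])
      have h1 := oneD_sum hα hab hbN
      have h2 := oneD_sum hα hcd hdN
      have hnn1 : (0:ℝ) ≤ (lx.map (fun p => (((2:ℝ)^p.1)⁻¹)^α)).sum := by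
        apply List.sum_nonneg
        intro x hx
        obtain ⟨p, -, rfl⟩ := List.mem_map.mp hx
        positivity
      have hLx : (0:ℝ) ≤ ((b:ℝ) - a)/2^N := by
        have : (a:ℝ) ≤ b := by exact_mod_cast hab.le
        have h2N : (0:ℝ) < 2^N := by positivity
        apply div_nonneg (by linarith) h2N.le
      have hLy : (0:ℝ) ≤ ((d:ℝ) - c)/2^N := by
        have : (c:ℝ) ≤ d := by exact_mod_cast hcd.le
        have h2N : (0:ℝ) < 2^N := by positivity
        apply div_nonneg (by linarith) h2N.le
      have hnn2 : (0:ℝ) ≤ (ly.map (fun q => (((2:ℝ)^q.1)⁻¹)^α)).sum := by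
        apply List.sum_nonneg
        intro x hx
        obtain ⟨p, -, rfl⟩ := List.mem_map.mp hx
        positivity
      have hmul : ((lx.map (fun p => (((2:ℝ)^p.1)⁻¹)^α)).sum)
            * ((ly.map (fun q => (((2:ℝ)^q.1)⁻¹)^α)).sum)
          ≤ (cc * (((b:ℝ) - a)/2^N)^α) * (cc * (((d:ℝ) - c)/2^N)^α) := by
        apply mul_le_mul h1 h2 hnn2 (by positivity)
      have hvr : (volume (Set.Icc ((a:ℝ)/2^N) ((b:ℝ)/2^N) ×ˢ
            Set.Icc ((c:ℝ)/2^N) ((d:ℝ)/2^N))).toReal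
          = (((b:ℝ) - a)/2^N) * (((d:ℝ) - c)/2^N) := by
        have e1 : (b:ℝ)/2^N - (a:ℝ)/2^N = ((b:ℝ) - a)/2^N := by ring
        have e2 : (d:ℝ)/2^N - (c:ℝ)/2^N = ((d:ℝ) - c)/2^N := by ring
        rw [Measure.volume_eq_prod, Measure.prod_prod, Real.volume_Icc, Real.volume_Icc,
          e1, e2, ENNReal.toReal_mul,
          ENNReal.toReal_ofReal hLx, ENNReal.toReal_ofReal hLy]
      calc ∑ t ∈ S.image F, (volume t).toReal ^ α
          ≤ ∑ pq ∈ S, (volume (F pq)).toReal ^ α := hA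
        _ = ((lx.map (fun p => (((2:ℝ)^p.1)⁻¹)^α)).sum)
            * ((ly.map (fun q => (((2:ℝ)^q.1)⁻¹)^α)).sum) := hB
        _ ≤ (cc * (((b:ℝ) - a)/2^N)^α) * (cc * (((d:ℝ) - c)/2^N)^α) := hmul
        _ = cc^2 * ((((b:ℝ) - a)/2^N) * (((d:ℝ) - c)/2^N))^α := by
            rw [Real.mul_rpow hLx hLy]; ring
        _ = cc^2 * (volume (Set.Icc ((a:ℝ)/2^N) ((b:ℝ)/2^N) ×ˢ
              Set.Icc ((c:ℝ)/2^N) ((d:ℝ)/2^N))).toReal ^ α := by rw [hvr]
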